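/- Let F be a field, n ≥ 2, and let c₁,…,c_{n−1} and d₁,…,d_{n−1} be nonzero elements of F. Set N = ∑_{i=1}^{n−1} cᵢ E_{i,i+1} and N' = ∑_{i=1}^{n−1} dᵢ E_{i,i+1}. If g ∈ GL_n(F) satisfies g N = N' g, then g is upper triangular, i.e. g_{ij} = 0 whenever i > j. -/

import Mathlib

/-- Let `F` be a field, `n ≥ 2`, and let `c₁,…,c_{n−1}` and `d₁,…,d_{n−1}` be nonzero elements
of `F`.  Set `N = ∑ cᵢ E_{i,i+1}` and `N' = ∑ dᵢ E_{i,i+1}`.  If `g ∈ GL_n(F)` satisfies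
`g N = N' g`, then `g` is upper triangular, i.e. `g i j = 0` whenever `i > j`. -/
theorem upperTriangular_of_conj_regular_nilpotent
    {F : Type*} [Field F] (n : ℕ) (hn : 2 ≤ n)
    (c d : Fin (n - 1) → F) (hc : ∀ i, c i ≠ 0) (hd : ∀ i, d i ≠ 0)
    (g : GL (Fin n) F)
    (hg : (g : Matrix (Fin n) (Fin n) F) *
        (∑ i : Fin (n - 1), Matrix.single
          (⟨i.1, by have := i.2; omega⟩ : Fin n) (⟨i.1 + 1, by have := i.2; omega⟩ : Fin n) (c i)) =
      (∑ i : Fin (n - 1), Matrix.single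
          (⟨i.1, by have := i.2; omega⟩ : Fin n) (⟨i.1 + 1, by have := i.2; omega⟩ : Fin n) (d i)) *
        (g : Matrix (Fin n) (Fin n) F)) :
    ∀ i j : Fin n, j < i → (g : Matrix (Fin n) (Fin n) F) i j = 0 := by
  set G := (g : Matrix (Fin n) (Fin n) F) with hG
  have key : ∀ i j : Fin n,
      (∑ k : Fin (n-1), (G * Matrix.single
          (⟨k.1, by have := k.2; omega⟩ : Fin n) (⟨k.1+1, by have := k.2; omega⟩ : Fin n) (c k)) i j)
      = ∑ k : Fin (n-1), (Matrix.single
          (⟨k.1, by have := k.2; omega⟩ : Fin n) (⟨k.1+1, by have := k.2; omega⟩ : Fin n) (d k) * G) i j := by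
    intro i j
    have h := congrFun (congrFun hg i) j
    simpa [Finset.mul_sum, Finset.sum_mul, Matrix.sum_apply] using h
  -- evaluate the left sum at column j+1
  have lhs_eval : ∀ (i : Fin n) (jk : Fin (n-1)),
      (∑ k : Fin (n-1), (G * Matrix.single
          (⟨k.1, by have := k.2; omega⟩ : Fin n) (⟨k.1+1, by have := k.2; omega⟩ : Fin n) (c k)) i
          (⟨jk.1+1, by have := jk.2; omega⟩ : Fin n))
      = G i (⟨jk.1, by have := jk.2; omega⟩ : Fin n) * c jk := by
    intro i jk
    rw [Finset.sum_eq_single_of_mem jk (Finset.mem_univ _)]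
    · exact Matrix.mul_single_apply_same _ _ _ _ _
    · intro k _ hk
      refine Matrix.mul_single_apply_of_ne _ _ _ _ _ ?_ _
      simp only [ne_eq, Fin.mk.injEq]
      intro h
      exact hk (Fin.ext (by omega))
  -- evaluate the right sum
  have rhs_eval0 : ∀ (j : Fin n), (i : Fin n) → i.1 = n - 1 →
      (∑ k : Fin (n-1), (Matrix.single
          (⟨k.1, by have := k.2; omega⟩ : Fin n) (⟨k.1+1, by have := k.2; omega⟩ : Fin n) (d k) * G) i j)
      = 0 := by
    intro j i hi
    refine Finset.sum_eq_zero fun k _ => ?_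
    refine Matrix.single_mul_apply_of_ne _ _ _ _ _ ?_ _
    simp only [ne_eq, Fin.ext_iff]
    have := k.2; omega
  have rhs_eval1 : ∀ (j : Fin n), (ik : Fin (n-1)) →
      (∑ k : Fin (n-1), (Matrix.single
          (⟨k.1, by have := k.2; omega⟩ : Fin n) (⟨k.1+1, by have := k.2; omega⟩ : Fin n) (d k) * G)
          (⟨ik.1, by have := ik.2; omega⟩ : Fin n) j)
      = d ik * G (⟨ik.1+1, by have := ik.2; omega⟩ : Fin n) j := by
    intro j ik
    rw [Finset.sum_eq_single_of_mem ik (Finset.mem_univ _)]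
    · exact Matrix.single_mul_apply_same _ _ _ _ _
    · intro k _ hk
      refine Matrix.single_mul_apply_of_ne _ _ _ _ _ ?_ _
      simp only [ne_eq, Fin.ext_iff]
      intro h
      exact hk (Fin.ext h.symm)
  -- downward induction
  have H : ∀ m : ℕ, ∀ i j : Fin n, i.1 + m = n - 1 → j < i → G i j = 0 := by
    intro m
    induction m with
    | zero =>
      intro i j hi hj
      have hj' : j.1 < n - 1 := by omega
      have h := key i ⟨j.1 + 1, by omega⟩
      rw [rhs_eval0 _ i (by omega)] at h
      have h2 := lhs_eval i ⟨j.1, hj'⟩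
      simp only at h2
      rw [h2] at h
      have : G i ⟨j.1, by omega⟩ = 0 := by
        rcases mul_eq_zero.mp h with h3 | h3
        · exact h3
        · exact absurd h3 (hc _)
      simpa using this
    | succ m ih =>
      intro i j hi hj
      have hi' : i.1 < n - 1 := by omega
      have hj' : j.1 < n - 1 := by omega
      have h := key i ⟨j.1 + 1, by omega⟩
      have h2 := lhs_eval i ⟨j.1, hj'⟩
      simp only at h2
      have h3 := rhs_eval1 (⟨j.1 + 1, by omega⟩ : Fin n) ⟨i.1, hi'⟩
      simp only at h3
      have hcast : (⟨(⟨i.1, hi'⟩ : Fin (n-1)).1, by omega⟩ : Fin n) = i := Fin.ext rfl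
      rw [hcast] at h3
      rw [h2, h3] at h
      have hz : G (⟨i.1 + 1, by omega⟩ : Fin n) (⟨j.1 + 1, by omega⟩ : Fin n) = 0 :=
        ih ⟨i.1 + 1, by omega⟩ ⟨j.1 + 1, by omega⟩ (show i.1 + 1 + m = n - 1 by omega)
          (Fin.mk_lt_mk.mpr (by omega))
      rw [hz, mul_zero] at h
      have : G i ⟨j.1, by omega⟩ = 0 := by
        rcases mul_eq_zero.mp h with h4 | h4
        · exact h4
        · exact absurd h4 (hc _)
      simpa using this
  intro i j hij
  exact H (n - 1 - i.1) i j (by have := i.2; omega) hij
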